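/- There exists a shoe economy with three agents and injective utilities in which the strong core is a proper nonempty subset of the weak core: the allocation X = ((ℓ_2,r_3),(ℓ_3,r_1),(ℓ_1,r_2)) is in the strong core, while Y = ((ℓ_3,r_1),(ℓ_2,r_3),(ℓ_1,r_2)) is in the weak core but weakly blocked (by the grand coalition using X), hence not in the strong core. -/

import Mathlib

/-- Objects of the shoe economy: `Sum.inl a` is the left shoe `ℓ_a`,
`Sum.inr b` the right shoe `r_b`. -/
abbrev Shoe := Fin 3 ⊕ Fin 3

def shoeEndow (i : Fin 3) : Finset Shoe := {Sum.inl i, Sum.inr i}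

def IsPairBundle (X : Finset Shoe) : Prop :=
  ∃ a b : Fin 3, X = {Sum.inl a, Sum.inr b}

def IsSAlloc (X : Fin 3 → Finset Shoe) (S : Finset (Fin 3)) : Prop :=
  (∀ i ∈ S, ∀ j ∈ S, i ≠ j → Disjoint (X i) (X j)) ∧
    S.biUnion X ⊆ S.biUnion shoeEndow

/-- `b1 ≻ b2 ≻ b3 ≻` all other pair bundles, for agent `i`. -/
def ShoeRanking3 (v : Fin 3 → Finset Shoe → EReal) (i : Fin 3)
    (b1 b2 b3 : Finset Shoe) : Prop :=
  v i b2 < v i b1 ∧ v i b3 < v i b2 ∧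
    ∀ X : Finset Shoe, IsPairBundle X → X ≠ b1 → X ≠ b2 → X ≠ b3 → v i X < v i b3

/-- `b1 ≻ b2 ≻` all other pair bundles, for agent `i`. -/
def ShoeRanking2 (v : Fin 3 → Finset Shoe → EReal) (i : Fin 3)
    (b1 b2 : Finset Shoe) : Prop :=
  v i b2 < v i b1 ∧
    ∀ X : Finset Shoe, IsPairBundle X → X ≠ b1 → X ≠ b2 → v i X < v i b2

/-- The allocation `X = ((ℓ2,r3), (ℓ3,r1), (ℓ1,r2))`. -/
def allocX : Fin 3 → Finset Shoe :=
  ![{Sum.inl 1, Sum.inr 2}, {Sum.inl 2, Sum.inr 0}, {Sum.inl 0, Sum.inr 1}]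

/-- The allocation `Y = ((ℓ3,r1), (ℓ2,r3), (ℓ1,r2))`. -/
def allocY : Fin 3 → Finset Shoe :=
  ![{Sum.inl 2, Sum.inr 0}, {Sum.inl 1, Sum.inr 2}, {Sum.inl 0, Sum.inr 1}]

-- auxiliary definitions and lemmas

instance : DecidablePred IsPairBundle := fun X => by
  unfold IsPairBundle; infer_instance

def score : Fin 3 → Fin 3 → Fin 3 → ℤ := fun i a b =>
  if i = 0 then
    if a = 1 ∧ b = 2 then 9 else if a = 2 ∧ b = 0 then 8
    else if a = 0 ∧ b = 0 then 7 else 3*(a:ℤ)+b-10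
  else if i = 1 then
    if a = 2 ∧ b = 0 then 9 else if a = 1 ∧ b = 2 then 8
    else if a = 1 ∧ b = 1 then 7 else 3*(a:ℤ)+b-10
  else
    if a = 0 ∧ b = 1 then 9 else if a = 2 ∧ b = 2 then 8 else 3*(a:ℤ)+b-10

noncomputable def vfun : Fin 3 → Finset Shoe → EReal := fun i X =>
  if IsPairBundle X then
    (((∑ p : Fin 3 × Fin 3, if X = {Sum.inl p.1, Sum.inr p.2} then score i p.1 p.2 else 0 : ℤ) : ℝ) : EReal)
  else ⊥

lemma pair_eq {a b c d : Fin 3} :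
    ({Sum.inl a, Sum.inr b} : Finset Shoe) = {Sum.inl c, Sum.inr d} ↔ a = c ∧ b = d := by
  revert a b c d; decide

lemma vfun_pair (i a b : Fin 3) :
    vfun i {Sum.inl a, Sum.inr b} = ((score i a b : ℝ) : EReal) := by
  unfold vfun
  rw [if_pos ⟨a, b, rfl⟩]
  congr 2
  rw [Fintype.sum_eq_single (a, b) (fun p hp => if_neg (fun h => hp (by
    obtain ⟨h1, h2⟩ := pair_eq.mp h
    exact Prod.ext h1.symm h2.symm)))]
  exact if_pos rfl

lemma top0 : ∀ a b : Fin 3, 8 < score 0 a b → a = 1 ∧ b = 2 := by decide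
lemma top1 : ∀ a b : Fin 3, 8 < score 1 a b → a = 2 ∧ b = 0 := by decide

lemma score_le (i a b : Fin 3) : score i a b ≤ 9 := by revert i a b; decide

lemma scoreInj : ∀ i a b c d : Fin 3, ¬(a = c ∧ b = d) → score i a b ≠ score i c d := by
  decide

lemma vfun_lt_vfun {i a b c d : Fin 3} (h : score i a b < score i c d) :
    vfun i {Sum.inl a, Sum.inr b} < vfun i {Sum.inl c, Sum.inr d} := by
  rw [vfun_pair, vfun_pair]
  exact_mod_cast h

lemma vfun_le_top (i : Fin 3) (X : Finset Shoe) : vfun i X ≤ ((9 : ℝ) : EReal) := by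
  by_cases hp : IsPairBundle X
  · obtain ⟨a, b, rfl⟩ := hp
    rw [vfun_pair]
    exact_mod_cast score_le i a b
  · simp [vfun, hp]

lemma allocX_val (i : Fin 3) : vfun i (allocX i) = ((9 : ℝ) : EReal) := by
  fin_cases i
  · show vfun 0 {Sum.inl 1, Sum.inr 2} = _
    rw [vfun_pair, show score 0 1 2 = 9 from by decide]; norm_num
  · show vfun 1 {Sum.inl 2, Sum.inr 0} = _
    rw [vfun_pair, show score 1 2 0 = 9 from by decide]; norm_num
  · show vfun 2 {Sum.inl 0, Sum.inr 1} = _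
    rw [vfun_pair, show score 2 0 1 = 9 from by decide]; norm_num

lemma allocY_val0 : vfun 0 (allocY 0) = ((8 : ℝ) : EReal) := by
  show vfun 0 {Sum.inl 2, Sum.inr 0} = _
  rw [vfun_pair, show score 0 2 0 = 8 from by decide]; norm_num

lemma allocY_val1 : vfun 1 (allocY 1) = ((8 : ℝ) : EReal) := by
  show vfun 1 {Sum.inl 1, Sum.inr 2} = _
  rw [vfun_pair, show score 1 1 2 = 8 from by decide]; norm_num

lemma allocY_val2 : vfun 2 (allocY 2) = ((9 : ℝ) : EReal) := by
  show vfun 2 {Sum.inl 0, Sum.inr 1} = _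
  rw [vfun_pair, show score 2 0 1 = 9 from by decide]; norm_num

/-- a shoe economy with injective utilities in which the strong
core is a proper nonempty subset of the weak core: `X` is in the strong core,
`Y` is in the weak core but is weakly blocked (by the grand coalition via `X`),
hence not in the strong core. -/
theorem shoe_economy_strong_core_proper_subset :
    ∃ v : Fin 3 → Finset Shoe → EReal,
      (∀ i X, ¬ IsPairBundle X → v i X = ⊥) ∧
      (∀ i X, IsPairBundle X → v i X ≠ ⊥) ∧
      -- injective utilities (no indifferences among pair bundles)
      (∀ i, ∀ X Y : Finset Shoe, IsPairBundle X → IsPairBundle Y → X ≠ Y →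
        v i X ≠ v i Y) ∧
      -- agent 1: (ℓ2,r3) ≻ (ℓ3,r1) ≻ (ℓ1,r1) ≻ rest
      ShoeRanking3 v 0 {Sum.inl 1, Sum.inr 2} {Sum.inl 2, Sum.inr 0} {Sum.inl 0, Sum.inr 0} ∧
      -- agent 2: (ℓ3,r1) ≻ (ℓ2,r3) ≻ (ℓ2,r2) ≻ rest
      ShoeRanking3 v 1 {Sum.inl 2, Sum.inr 0} {Sum.inl 1, Sum.inr 2} {Sum.inl 1, Sum.inr 1} ∧
      -- agent 3: (ℓ1,r2) ≻ (ℓ3,r3) ≻ rest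
      ShoeRanking2 v 2 {Sum.inl 0, Sum.inr 1} {Sum.inl 2, Sum.inr 2} ∧
      -- X is an allocation in the strong core: not weakly blocked
      IsSAlloc allocX Finset.univ ∧
      (¬ ∃ (S : Finset (Fin 3)) (X' : Fin 3 → Finset Shoe), S.Nonempty ∧
          IsSAlloc X' S ∧ (∀ i ∈ S, v i (allocX i) ≤ v i (X' i)) ∧
          (∃ i ∈ S, v i (allocX i) < v i (X' i))) ∧
      -- Y is an allocation in the weak core: not strongly blocked
      IsSAlloc allocY Finset.univ ∧
      (¬ ∃ (S : Finset (Fin 3)) (X' : Fin 3 → Finset Shoe), S.Nonempty ∧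
          IsSAlloc X' S ∧ ∀ i ∈ S, v i (allocY i) < v i (X' i)) ∧
      -- but Y is weakly blocked by the grand coalition via X
      ((∀ i, v i (allocY i) ≤ v i (allocX i)) ∧
        (∃ i, v i (allocY i) < v i (allocX i))) := by
  refine ⟨vfun, ?_, ?_, ?_, ?_, ?_, ?_, ?_, ?_, ?_, ?_, ?_⟩
  · intro i X h; simp [vfun, h]
  · rintro i X ⟨a, b, rfl⟩
    rw [vfun_pair]; exact EReal.coe_ne_bot _
  · rintro i X Y ⟨a, b, rfl⟩ ⟨c, d, rfl⟩ hne h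
    rw [vfun_pair, vfun_pair] at h
    exact scoreInj i a b c d (fun hc => hne (pair_eq.mpr hc)) (by exact_mod_cast h)
  · refine ⟨vfun_lt_vfun (by decide), vfun_lt_vfun (by decide), ?_⟩
    rintro X ⟨a, b, rfl⟩ h1 h2 h3
    have h1' : ¬(a = 1 ∧ b = 2) := fun h => h1 (pair_eq.mpr h)
    have h2' : ¬(a = 2 ∧ b = 0) := fun h => h2 (pair_eq.mpr h)
    have h3' : ¬(a = 0 ∧ b = 0) := fun h => h3 (pair_eq.mpr h)
    clear h1 h2 h3
    exact vfun_lt_vfun (by revert a b; decide)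
  · refine ⟨vfun_lt_vfun (by decide), vfun_lt_vfun (by decide), ?_⟩
    rintro X ⟨a, b, rfl⟩ h1 h2 h3
    have h1' : ¬(a = 2 ∧ b = 0) := fun h => h1 (pair_eq.mpr h)
    have h2' : ¬(a = 1 ∧ b = 2) := fun h => h2 (pair_eq.mpr h)
    have h3' : ¬(a = 1 ∧ b = 1) := fun h => h3 (pair_eq.mpr h)
    clear h1 h2 h3
    exact vfun_lt_vfun (by revert a b; decide)
  · refine ⟨vfun_lt_vfun (by decide), ?_⟩
    rintro X ⟨a, b, rfl⟩ h1 h2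
    have h1' : ¬(a = 0 ∧ b = 1) := fun h => h1 (pair_eq.mpr h)
    have h2' : ¬(a = 2 ∧ b = 2) := fun h => h2 (pair_eq.mpr h)
    clear h1 h2
    exact vfun_lt_vfun (by revert a b; decide)
  · constructor
    · decide
    · decide
  · rintro ⟨S, X', hS, hA, hle, i, hiS, hlt⟩
    rw [allocX_val] at hlt
    exact absurd hlt (not_lt.mpr (vfun_le_top i (X' i)))
  · constructor
    · decide
    · decide
  · rintro ⟨S, X', hS, ⟨hd, hsub⟩, hlt⟩
    have h2 : (2 : Fin 3) ∉ S := by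
      intro h2
      have := hlt 2 h2
      rw [allocY_val2] at this
      exact absurd this (not_lt.mpr (vfun_le_top 2 (X' 2)))
    have key : ∀ i ∈ S, ∀ a b : Fin 3, X' i = {Sum.inl a, Sum.inr b} →
        a = 2 ∨ b = 2 → False := by
      intro i hi a b hx hab
      have hmem : (2 : Fin 3) ∈ S := by
        have hin : (if a = 2 then (Sum.inl 2 : Shoe) else Sum.inr 2) ∈ X' i := by
          rw [hx]
          rcases hab with h | h
          · subst h; simp
          · subst h
            by_cases ha : a = 2 <;> simp [ha]
        have := hsub (Finset.mem_biUnion.mpr ⟨i, hi, hin⟩)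
        obtain ⟨j, hj, hmj⟩ := Finset.mem_biUnion.mp this
        have : j = 2 := by
          by_cases ha : a = 2 <;> simp [ha, shoeEndow] at hmj <;>
            rcases hmj with h | h <;> simp_all
        exact this ▸ hj
      exact h2 hmem
    obtain ⟨i, hi⟩ := hS
    have hlti := hlt i hi
    have h3 : i = 0 ∨ i = 1 ∨ i = 2 := by fin_cases i <;> simp
    rcases h3 with rfl | rfl | rfl
    · rw [allocY_val0] at hlti
      by_cases hp : IsPairBundle (X' 0)
      · obtain ⟨a, b, hx⟩ := hp
        rw [hx, vfun_pair] at hlti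
        have h8 : (8 : ℤ) < score 0 a b := by exact_mod_cast hlti
        have hab := top0 a b h8
        exact key 0 hi a b hx (Or.inr hab.2)
      · rw [show vfun 0 (X' 0) = ⊥ from by simp [vfun, hp]] at hlti
        exact absurd hlti (by simp)
    · rw [allocY_val1] at hlti
      by_cases hp : IsPairBundle (X' 1)
      · obtain ⟨a, b, hx⟩ := hp
        rw [hx, vfun_pair] at hlti
        have h8 : (8 : ℤ) < score 1 a b := by exact_mod_cast hlti
        have hab := top1 a b h8
        exact key 1 hi a b hx (Or.inl hab.1)
      · rw [show vfun 1 (X' 1) = ⊥ from by simp [vfun, hp]] at hlti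
        exact absurd hlti (by simp)
    · exact h2 hi
  · constructor
    · intro i
      rw [allocX_val]
      exact vfun_le_top i _
    · exact ⟨0, by rw [allocY_val0, allocX_val]; exact_mod_cast (by norm_num : (8:ℝ) < 9)⟩
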